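/- Let R be a ring equipped with a dimension function dim on finitely generated projective modules that is additive under direct sums, and suppose every finitely generated submodule of a projective R-module is projective. If 0 → M₀ → M₁ → M₂ → 0 is a short exact sequence of R-modules and dim'(M) = sup{dim(P) | P ⊆ M finitely generated projective submodule}, then dim'(M₁) ≥ dim'(M₀) + dim'(M₂). -/
import Mathlib


open scoped NNReal ENNReal

/-- Let `R` be a semi-hereditary ring with a dimension function `d`, defined on finitely
generated projective modules with values in `[0,∞)`, which depends only on the isomorphism
class and is additive under direct sums.  Let `dim'(M) = sup { d(P) | P ⊆ M f.g. projective }`.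
Then for any short exact sequence `0 → M₀ → M₁ → M₂ → 0` of `R`-modules,
`dim'(M₁) ≥ dim'(M₀) + dim'(M₂)`. -/
theorem stmt18 (R : Type) [Ring R]
    (d : ∀ (M : Type) [AddCommGroup M] [Module R M], ℝ≥0)
    (hiso : ∀ (M N : Type) [AddCommGroup M] [Module R M] [AddCommGroup N] [Module R N],
      Module.Finite R M → Module.Projective R M → Module.Finite R N → Module.Projective R N →
      (M ≃ₗ[R] N) → d M = d N)
    (hadd : ∀ (M N : Type) [AddCommGroup M] [Module R M] [AddCommGroup N] [Module R N],
      Module.Finite R M → Module.Projective R M → Module.Finite R N → Module.Projective R N →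
      d (M × N) = d M + d N)
    (hsh : ∀ (M : Type) [AddCommGroup M] [Module R M], Module.Projective R M →
      ∀ N : Submodule R M, N.FG → Module.Projective R N)
    (M₀ M₁ M₂ : Type) [AddCommGroup M₀] [Module R M₀] [AddCommGroup M₁] [Module R M₁]
    [AddCommGroup M₂] [Module R M₂]
    (f : M₀ →ₗ[R] M₁) (g : M₁ →ₗ[R] M₂)
    (hf : Function.Injective f) (hg : Function.Surjective g)
    (hfg : LinearMap.range f = LinearMap.ker g) :
    (⨆ P : {N : Submodule R M₀ // N.FG ∧ Module.Projective R N}, (d ↥P.1 : ℝ≥0∞)) +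
      (⨆ P : {N : Submodule R M₂ // N.FG ∧ Module.Projective R N}, (d ↥P.1 : ℝ≥0∞)) ≤
    ⨆ P : {N : Submodule R M₁ // N.FG ∧ Module.Projective R N}, (d ↥P.1 : ℝ≥0∞) := by
  have hne : ∀ (M : Type) [AddCommGroup M] [Module R M],
      Nonempty {N : Submodule R M // N.FG ∧ Module.Projective R N} := by
    intro M _ _
    exact ⟨⟨⊥, Submodule.fg_bot, inferInstance⟩⟩
  haveI := hne M₀; haveI := hne M₂
  rw [ENNReal.iSup_add]
  refine iSup_le fun P₀ => ?_
  rw [ENNReal.add_iSup]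
  refine iSup_le fun P₂ => ?_
  obtain ⟨Q₀, hQ₀fg, hQ₀proj⟩ := P₀
  obtain ⟨Q₂, hQ₂fg, hQ₂proj⟩ := P₂
  haveI : Module.Finite R Q₀ := Module.Finite.iff_fg.2 hQ₀fg
  haveI : Module.Finite R Q₂ := Module.Finite.iff_fg.2 hQ₂fg
  -- lift the inclusion Q₂ → M₂ along g
  obtain ⟨s, hs⟩ := Module.projective_lifting_property g Q₂.subtype hg
  -- the map (a,b) ↦ f a + s b
  set φ : (Q₀ × Q₂) →ₗ[R] M₁ := LinearMap.coprod (f ∘ₗ Q₀.subtype) s with hφ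
  have hginj : Function.Injective φ := by
    rw [injective_iff_map_eq_zero]
    rintro ⟨a, b⟩ hab
    have hab' : f a + s b = 0 := hab
    have hgb : g (s b) = (b : M₂) := by
      have := congrArg (fun h => h b) hs
      simpa using this
    have hb : (b : M₂) = 0 := by
      have h1 : g (f a + s b) = 0 := by rw [hab']; simp
      have h2 : g (f a) = 0 := by
        have : f (a : M₀) ∈ LinearMap.ker g := hfg ▸ LinearMap.mem_range_self f (a : M₀)
        simpa using this
      rw [map_add, h2, zero_add, hgb] at h1
      exact h1
    have hb0 : b = 0 := Subtype.ext hb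
    have ha : f (a : M₀) = 0 := by
      rw [hb0] at hab'; simpa using hab'
    have ha0 : (a : M₀) = 0 := hf (by simpa using ha)
    exact Prod.ext (Subtype.ext ha0) hb0
  set Q : Submodule R M₁ := LinearMap.range φ with hQ
  have hQfg : Q.FG := by
    rw [hQ, LinearMap.range_eq_map]
    exact Submodule.FG.map φ Module.Finite.fg_top
  have e : (Q₀ × Q₂) ≃ₗ[R] Q := LinearEquiv.ofInjective φ hginj
  haveI hQfin : Module.Finite R Q := Module.Finite.equiv e
  haveI hQproj : Module.Projective R Q := Module.Projective.of_equiv e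
  have hd : d ↥Q = d ↥Q₀ + d ↥Q₂ := by
    rw [← hadd ↥Q₀ ↥Q₂ inferInstance inferInstance inferInstance inferInstance]
    exact (hiso _ _ hQfin hQproj inferInstance inferInstance e.symm)
  calc ((d ↥Q₀ : ℝ≥0∞) + (d ↥Q₂ : ℝ≥0∞)) = (d ↥Q : ℝ≥0∞) := by
        rw [hd]; push_cast; ring
    _ ≤ ⨆ P : {N : Submodule R M₁ // N.FG ∧ Module.Projective R N}, (d ↥P.1 : ℝ≥0∞) :=
        le_iSup (fun P : {N : Submodule R M₁ // N.FG ∧ Module.Projective R N} => (d ↥P.1 : ℝ≥0∞))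
          ⟨Q, hQfg, hQproj⟩
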